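/- Let 𝒞 ⊆ 𝔞 be a nonempty finitely generated convex set with asymptotic cone C. Then the dual cone C∨ is the disjoint union of the cones 𝔞_F^+ over all faces F of 𝒞: the sets 𝔞_F^+, for F ∈ ℱ(𝒞), are pairwise disjoint, each is contained in C∨, and their union equals C∨. -/

import Mathlib

open Pointwise

variable {E : Type*} [NormedAddCommGroup E] [InnerProductSpace ℝ E] [FiniteDimensional ℝ E]

/-- A finitely generated convex set: a finite intersection of closed half-spaces. -/
def IsFGConvex (C : Set E) : Prop :=
  ∃ s : Finset (E × ℝ), C = {X | ∀ p ∈ s, (inner ℝ p.1 X : ℝ) ≤ p.2}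

/-- The tangent cone `T_C(H) = ℝ≥0 · (C - H)`. -/
def tangCone (C : Set E) (H : E) : Set E :=
  {X | ∃ t : ℝ, 0 ≤ t ∧ ∃ c ∈ C, X = t • (c - H)}

/-- The normal cone `N_C(H) = {Y | (Y,X) ≤ 0 for all X ∈ T_C(H)}`. -/
def normCone (C : Set E) (H : E) : Set E :=
  {Y | ∀ X ∈ tangCone C H, (inner ℝ Y X : ℝ) ≤ 0}

/-- The asymptotic cone of `C`: the set of `X` with `C + ℝ≥0 · X = C`. -/
def asympCone (C : Set E) : Set E :=
  {X | C + {Y | ∃ t : ℝ, 0 ≤ t ∧ Y = t • X} = C}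

/-- The dual cone `C∨ = {Y | (Y,X) ≤ 0 for all X ∈ C}`. -/
def polarCone (C : Set E) : Set E :=
  {Y | ∀ X ∈ C, (inner ℝ Y X : ℝ) ≤ 0}

/-- A face of `C`: the (nonempty) intersection of `C` with a supporting affine hyperplane
`{H | (λ,H) = c}`, where `(λ,H) ≤ c` on all of `C` (the case `λ = 0` being allowed). -/
def IsFace (C F : Set E) : Prop :=
  F.Nonempty ∧ ∃ (lam : E) (c : ℝ), (∀ H ∈ C, (inner ℝ lam H : ℝ) ≤ c) ∧
    F = {H | H ∈ C ∧ (inner ℝ lam H : ℝ) = c}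

/-- `𝔞_F^+`: the relative interior of the normal cone `N_C(X_F)`, for `X_F` in the relative
interior of the face `F` (this normal cone does not depend on the choice of such `X_F`). -/
def aFplus (C F : Set E) : Set E :=
  ⋃ X ∈ intrinsicInterior ℝ F, intrinsicInterior ℝ (normCone C X)


open RealInnerProductSpace

section Aux

/-- Extension lemma: from a point of the intrinsic interior one can move slightly past
any point of the set while staying in the set. -/
lemma relint_extend {s : Set E} {x y : E} (hx : x ∈ intrinsicInterior ℝ s) (hy : y ∈ s) :
    ∃ ε : ℝ, 0 < ε ∧ x + ε • (x - y) ∈ s := by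
  obtain ⟨x', hx', hxx⟩ := mem_intrinsicInterior.1 hx
  have hxA : x ∈ affineSpan ℝ s := hxx ▸ x'.2
  have hyA : y ∈ affineSpan ℝ s := subset_affineSpan ℝ s hy
  have hmem : ∀ t : ℝ, x + t • (x - y) ∈ affineSpan ℝ s := by
    intro t
    have := AffineSubspace.smul_vsub_vadd_mem (affineSpan ℝ s) t hxA hyA hxA
    simpa [vsub_eq_sub, vadd_eq_add, add_comm] using this
  let γ : ℝ → affineSpan ℝ s := fun t => ⟨x + t • (x - y), hmem t⟩
  have hcont : Continuous γ := by
    apply Continuous.subtype_mk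
    fun_prop
  have h0 : γ 0 = x' := Subtype.ext (by simp [γ, hxx])
  have hnh : γ ⁻¹' (interior ((↑) ⁻¹' s : Set (affineSpan ℝ s))) ∈ nhds (0 : ℝ) := by
    apply hcont.continuousAt.preimage_mem_nhds
    rw [h0]
    exact isOpen_interior.mem_nhds hx'
  obtain ⟨δ, hδ, hball⟩ := Metric.mem_nhds_iff.1 hnh
  refine ⟨δ / 2, by linarith, ?_⟩
  have h2 : γ (δ / 2) ∈ interior ((↑) ⁻¹' s : Set (affineSpan ℝ s)) := by
    apply hball
    simp only [Metric.mem_ball, Real.dist_eq, sub_zero]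
    rw [abs_of_pos (by linarith)]
    linarith
  have := interior_subset h2
  exact this


set_option maxHeartbeats 1000000 in
/-- Core lemma: membership in the intrinsic interior of a dual cone. -/
lemma mem_intrinsicInterior_dual
    {D : Set E} (hDcl : IsClosed D) (h0 : (0 : E) ∈ D)
    (hsmul : ∀ t : ℝ, 0 ≤ t → ∀ w ∈ D, t • w ∈ D)
    (hadd : ∀ w ∈ D, ∀ v ∈ D, w + v ∈ D)
    {Y : E} (hY : Y ∈ {Z : E | ∀ W ∈ D, ⟪Z, W⟫ ≤ 0})
    (hlin : ∀ W ∈ D, ⟪Y, W⟫ = 0 → -W ∈ D) :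
    Y ∈ intrinsicInterior ℝ {Z : E | ∀ W ∈ D, ⟪Z, W⟫ ≤ 0} := by
  classical
  set N : Set E := {Z : E | ∀ W ∈ D, ⟪Z, W⟫ ≤ 0} with hN
  -- the lineality subspace of D
  let L : Submodule ℝ E :=
    { carrier := {W | W ∈ D ∧ -W ∈ D}
      add_mem' := by
        rintro a b ⟨ha, ha'⟩ ⟨hb, hb'⟩
        refine ⟨hadd a ha b hb, ?_⟩
        rw [neg_add]
        exact hadd _ ha' _ hb'
      zero_mem' := ⟨h0, by simpa using h0⟩
      smul_mem' := by
        rintro c a ⟨ha, ha'⟩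
        rcases le_or_gt 0 c with hc | hc
        · exact ⟨hsmul c hc a ha, by simpa [smul_neg] using hsmul c hc _ ha'⟩
        · constructor
          · have := hsmul (-c) (by linarith) _ ha'
            simpa [smul_neg, neg_smul] using this
          · have := hsmul (-c) (by linarith) _ ha
            simpa [smul_neg, neg_smul] using this }
  have hLD : ∀ w ∈ L, w ∈ D := fun w hw => hw.1
  have hLnD : ∀ w ∈ L, -w ∈ D := fun w hw => hw.2
  -- points of L are orthogonal to everything in the affine span of N
  have horthoN : ∀ w ∈ L, ∀ Z ∈ N, ⟪Z, w⟫ = 0 := by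
    intro w hw Z hZ
    have h1 := hZ w (hLD w hw)
    have h2 := hZ (-w) (hLnD w hw)
    rw [inner_neg_right] at h2
    linarith
  have horthoSpan : ∀ w ∈ L, ∀ Z ∈ affineSpan ℝ N, ⟪Z, w⟫ = 0 := by
    intro w hw Z hZ
    set f : E →ₗ[ℝ] ℝ :=
      { toFun := fun z => ⟪z, w⟫
        map_add' := fun a b => inner_add_left _ _ _
        map_smul' := fun c a => by simp [real_inner_smul_left] }
    have hsub : affineSpan ℝ N ≤ (LinearMap.ker f).toAffineSubspace := by
      apply affineSpan_le.2
      intro z hz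
      simpa [f] using horthoN w hw z hz
    have := hsub hZ
    simpa [Submodule.mem_toAffineSubspace, LinearMap.mem_ker, f] using this
  -- decomposition of elements of D
  have hdecomp : ∀ W ∈ D, ∃ wl w' : E, wl ∈ L ∧ w' ∈ D ∧ w' ∈ (Lᗮ : Submodule ℝ E) ∧
      W = wl + w' := by
    intro W hW
    refine ⟨(L.starProjection W : E), W - (L.starProjection W : E),
      L.starProjection_apply_mem W, ?_, Submodule.sub_starProjection_mem_orthogonal W, by abel⟩
    have := hadd W hW _ (hLnD _ (L.starProjection_apply_mem W))
    simpa [sub_eq_add_neg] using this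
  -- the key uniform bound
  have hδ : ∃ δ : ℝ, 0 < δ ∧ ∀ W ∈ D, W ∈ (Lᗮ : Submodule ℝ E) → ⟪Y, W⟫ ≤ -δ * ‖W‖ := by
    set K : Set E := {W | (W ∈ D ∧ W ∈ (Lᗮ : Submodule ℝ E)) ∧ ‖W‖ = 1} with hK
    have hKsub : K ⊆ Metric.sphere 0 1 := by
      intro W hW; simpa [mem_sphere_zero_iff_norm] using hW.2
    have hKcl : IsClosed K := by
      refine IsClosed.inter (hDcl.inter (Submodule.closed_of_finiteDimensional _)) ?_
      exact isClosed_eq continuous_norm continuous_const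
    have hKcp : IsCompact K := (isCompact_sphere (0 : E) 1).of_isClosed_subset hKcl hKsub
    have hneg : ∀ W ∈ K, ⟪Y, W⟫ < 0 := by
      rintro W ⟨⟨hWD, hWp⟩, hWn⟩
      rcases lt_or_eq_of_le (hY W hWD) with h | h
      · exact h
      · exfalso
        have hWL : W ∈ L := ⟨hWD, hlin W hWD h⟩
        have : W = 0 := by
          have := hWp W hWL
          simpa [inner_self_eq_zero] using this
        rw [this] at hWn; simp at hWn
    rcases Set.eq_empty_or_nonempty K with hKe | hKne
    · refine ⟨1, one_pos, ?_⟩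
      intro W hWD hWp
      rcases eq_or_ne W 0 with rfl | hW0
      · simp
      · exfalso
        have : ‖W‖⁻¹ • W ∈ K := by
          refine ⟨⟨hsmul _ (by positivity) _ hWD, Submodule.smul_mem _ _ hWp⟩, ?_⟩
          simp [norm_smul, abs_of_nonneg, inv_mul_cancel₀ (norm_ne_zero_iff.2 hW0)]
        rw [hKe] at this; exact this
    · have hcontf : Continuous fun W : E => (⟪Y, W⟫ : ℝ) := continuous_const.inner continuous_id
      obtain ⟨W₀, hW₀K, hW₀max⟩ := hKcp.exists_isMaxOn hKne hcontf.continuousOn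
      refine ⟨-⟪Y, W₀⟫, by linarith [hneg W₀ hW₀K], ?_⟩
      intro W hWD hWp
      rcases eq_or_ne W 0 with rfl | hW0
      · simp
      · have hmem : ‖W‖⁻¹ • W ∈ K := by
          refine ⟨⟨hsmul _ (by positivity) _ hWD, Submodule.smul_mem _ _ hWp⟩, ?_⟩
          simp [norm_smul, abs_of_nonneg, inv_mul_cancel₀ (norm_ne_zero_iff.2 hW0)]
        have := hW₀max hmem
        simp only [Set.mem_setOf_eq, real_inner_smul_right] at this
        have hWnorm : (0:ℝ) < ‖W‖ := norm_pos_iff.2 hW0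
        have h6 : ‖W‖ * (‖W‖⁻¹ * ⟪Y, W⟫) ≤ ‖W‖ * ⟪Y, W₀⟫ :=
          mul_le_mul_of_nonneg_left this (le_of_lt hWnorm)
        rw [← mul_assoc, mul_inv_cancel₀ (ne_of_gt hWnorm), one_mul] at h6
        nlinarith [h6]
  obtain ⟨δ, hδpos, hδbound⟩ := hδ
  -- conclude
  have hYA : Y ∈ affineSpan ℝ N := subset_affineSpan ℝ N hY
  refine mem_intrinsicInterior.2 ⟨⟨Y, hYA⟩, ?_, rfl⟩
  rw [mem_interior_iff_mem_nhds, Metric.mem_nhds_iff]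
  refine ⟨δ, hδpos, ?_⟩
  rintro ⟨Z, hZA⟩ hz
  have hdist : ‖Z - Y‖ < δ := by
    have := hz
    rw [Metric.mem_ball, Subtype.dist_eq, dist_eq_norm] at this
    exact this
  intro W hW
  obtain ⟨wl, w', hwl, hw'D, hw'p, rfl⟩ := hdecomp W hW
  have h1 : ⟪Z, wl⟫ = 0 := horthoSpan wl hwl Z hZA
  have h2 : ⟪Y, w'⟫ ≤ -δ * ‖w'‖ := hδbound w' hw'D hw'p
  have h3 : ⟪Z - Y, w'⟫ ≤ ‖Z - Y‖ * ‖w'‖ := real_inner_le_norm _ _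
  have h4 : ⟪Z, w'⟫ = ⟪Y, w'⟫ + ⟪Z - Y, w'⟫ := by
    rw [inner_sub_left]; ring
  have h5 : ⟪Z, wl + w'⟫ = ⟪Z, wl⟫ + ⟪Z, w'⟫ := inner_add_right _ _ _
  rw [Set.mem_setOf_eq] at *
  rcases eq_or_ne w' 0 with rfl | hw'0
  · simp [h5, h1]
  · have hn : (0:ℝ) < ‖w'‖ := norm_pos_iff.2 hw'0
    nlinarith [h2, h3, h4, h5, h1, hdist]


variable {ι : Type*}

/-- The cone generated by the vectors `v i`, `i ∈ s`. -/
def coneOf (v : ι → E) (s : Finset ι) : Set E :=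
  {x | ∃ t : ι → ℝ, (∀ i, 0 ≤ t i) ∧ x = ∑ i ∈ s, t i • v i}

lemma coneOf_mono {v : ι → E} {s T : Finset ι} (hT : T ⊆ s) : coneOf v T ⊆ coneOf v s := by
  classical
  rintro x ⟨t, ht, rfl⟩
  refine ⟨fun i => if i ∈ T then t i else 0, fun i => ?_, ?_⟩
  · dsimp only; split
    · exact ht _
    · exact le_rfl
  · have h1 : ∑ i ∈ T, (if i ∈ T then t i else 0) • v i
        = ∑ i ∈ s, (if i ∈ T then t i else 0) • v i :=
      Finset.sum_subset hT (fun x _ hx => by simp [hx])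
    rw [← h1]
    exact Finset.sum_congr rfl fun i hi => by simp [hi]

lemma caratheodory_cone {v : ι → E} (s : Finset ι) :
    ∀ x ∈ coneOf v s, ∃ T ⊆ s, LinearIndependent ℝ (fun i : T => v i) ∧ x ∈ coneOf v T := by
  classical
  induction s using Finset.strongInduction with
  | _ s ih =>
    intro x hx
    by_cases hli : LinearIndependent ℝ (fun i : s => v i)
    · exact ⟨s, Finset.Subset.refl s, hli, hx⟩
    · obtain ⟨t, ht0, rfl⟩ := hx
      obtain ⟨g, hgsum, i₀, hi₀⟩ := Fintype.not_linearIndependent_iff.1 hli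
      -- extend g to ι
      set g' : ι → ℝ := fun i => if h : i ∈ s then g ⟨i, h⟩ else 0 with hg'
      have hg'sum : ∑ i ∈ s, g' i • v i = 0 := by
        rw [← hgsum, ← Finset.sum_coe_sort s (fun i => g' i • v i)]
        apply Finset.sum_congr rfl
        intro i _
        simp [hg', i.2]
      have hg'i₀ : g' (i₀ : ι) ≠ 0 := by simpa [hg', i₀.2] using hi₀
      -- wlog there is a positive coefficient
      have main : ∀ g' : ι → ℝ, (∑ i ∈ s, g' i • v i = 0) → (∃ j ∈ s, 0 < g' j) →
          ∃ T ⊆ s, LinearIndependent ℝ (fun i : T => v i) ∧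
            (∑ i ∈ s, t i • v i) ∈ coneOf v T := by
        intro g hgsum ⟨j₀, hj₀s, hj₀⟩
        set P := s.filter (fun i => 0 < g i) with hP
        have hPne : P.Nonempty := ⟨j₀, Finset.mem_filter.2 ⟨hj₀s, hj₀⟩⟩
        obtain ⟨j, hjP, hjmin⟩ := P.exists_min_image (fun i => t i / g i) hPne
        have hjs : j ∈ s := (Finset.mem_filter.1 hjP).1
        have hgj : 0 < g j := (Finset.mem_filter.1 hjP).2
        set lam := t j / g j with hlam
        have hlam0 : 0 ≤ lam := div_nonneg (ht0 j) (le_of_lt hgj)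
        set t' : ι → ℝ := fun i => t i - lam * g i with ht'
        have ht'0 : ∀ i ∈ s, 0 ≤ t' i := by
          intro i his
          rcases le_or_gt (g i) 0 with hgi | hgi
          · have : lam * g i ≤ 0 := mul_nonpos_of_nonneg_of_nonpos hlam0 hgi
            have := ht0 i
            simp only [ht']
            linarith
          · have hiP : i ∈ P := Finset.mem_filter.2 ⟨his, hgi⟩
            have hmin := hjmin i hiP
            have h2 : lam * g i ≤ t i := (le_div_iff₀ hgi).1 hmin
            simp only [ht']
            linarith
        have ht'j : t' j = 0 := by
          simp only [ht', hlam]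
          field_simp
          ring
        have hsum : ∑ i ∈ s, t i • v i = ∑ i ∈ s, t' i • v i := by
          simp only [ht', sub_smul, mul_smul, Finset.sum_sub_distrib, ← Finset.smul_sum, hgsum,
            smul_zero, sub_zero]
        have hx' : (∑ i ∈ s, t i • v i) ∈ coneOf v (s.erase j) := by
          refine ⟨fun i => if i ∈ s.erase j then t' i else 0, ?_, ?_⟩
          · intro i
            by_cases h : i ∈ s.erase j
            · simpa [h] using ht'0 i (Finset.mem_of_mem_erase h)
            · simp [h]
          · rw [hsum, ← Finset.add_sum_erase _ _ hjs, ht'j, zero_smul, zero_add]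
            apply Finset.sum_congr rfl
            intro i hi
            simp [hi]
        obtain ⟨T, hT, hTli, hxT⟩ := ih (s.erase j) (Finset.erase_ssubset hjs) _ hx'
        exact ⟨T, hT.trans (Finset.erase_subset _ _), hTli, hxT⟩
      by_cases hpos : ∃ j ∈ s, 0 < g' j
      · exact main g' hg'sum hpos
      · have hneg : ∃ j ∈ s, 0 < -(g' j) := by
          push_neg at hpos
          refine ⟨i₀, i₀.2, ?_⟩
          rcases lt_or_eq_of_le (hpos (i₀ : ι) i₀.2) with h | h
          · linarith
          · exact absurd h hg'i₀
        refine main (fun i => -g' i) ?_ hneg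
        simp only [neg_smul, Finset.sum_neg_distrib, hg'sum, neg_zero]

lemma coneOf_closed_of_li {v : ι → E} {T : Finset ι}
    (hli : LinearIndependent ℝ (fun i : T => v i)) : IsClosed (coneOf v T) := by
  classical
  let φ : (T → ℝ) →ₗ[ℝ] E :=
    { toFun := fun t => ∑ i : T, t i • v i
      map_add' := by
        intro a b
        simp [add_smul, Finset.sum_add_distrib]
      map_smul' := by
        intro c a
        simp [mul_smul, Finset.smul_sum] }
  have hinj : Function.Injective φ := by
    rw [← LinearMap.ker_eq_bot]
    rw [LinearMap.ker_eq_bot']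
    intro m hm
    have := Fintype.linearIndependent_iff.1 hli m hm
    funext i
    exact this i
  have hemb : IsClosedMap φ := (LinearMap.isClosedEmbedding_of_injective
    (LinearMap.ker_eq_bot.2 hinj)).isClosedMap
  have hset : IsClosed {t : T → ℝ | ∀ i, 0 ≤ t i} := by
    have : {t : T → ℝ | ∀ i, 0 ≤ t i} = ⋂ i : T, {t : T → ℝ | 0 ≤ t i} := by
      ext; simp
    rw [this]
    exact isClosed_iInter fun i => isClosed_le continuous_const (continuous_apply i)
  have himg : coneOf v T = φ '' {t : T → ℝ | ∀ i, 0 ≤ t i} := by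
    ext x
    constructor
    · rintro ⟨t, ht, rfl⟩
      refine ⟨fun i => t i, fun i => ht i, ?_⟩
      simp only [φ, LinearMap.coe_mk, AddHom.coe_mk]
      rw [← Finset.sum_coe_sort T (fun i => t i • v i)]
      rfl
    · rintro ⟨t, ht, rfl⟩
      refine ⟨fun i => if h : i ∈ T then t ⟨i, h⟩ else 0, fun i => ?_, ?_⟩
      · dsimp only
        split
        · exact ht _
        · exact le_rfl
      simp only [φ, LinearMap.coe_mk, AddHom.coe_mk]
      rw [← Finset.sum_coe_sort T]
      apply Finset.sum_congr rfl
      intro i _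
      simp [i.2]
  rw [himg]
  exact hemb _ hset

lemma coneOf_isClosed (v : ι → E) (s : Finset ι) : IsClosed (coneOf v s) := by
  classical
  have hun : coneOf v s =
      ⋃ T ∈ {T : Finset ι | T ⊆ s ∧ LinearIndependent ℝ (fun i : T => v i)}, coneOf v T := by
    ext x
    constructor
    · intro hx
      obtain ⟨T, hT, hli, hxT⟩ := caratheodory_cone s x hx
      exact Set.mem_biUnion ⟨hT, hli⟩ hxT
    · intro hx
      obtain ⟨T, hT, hxT⟩ := Set.mem_iUnion₂.1 hx
      exact coneOf_mono hT.1 hxT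
  rw [hun]
  apply Set.Finite.isClosed_biUnion
  · exact Set.Finite.subset (s.powerset : Finset (Finset ι)).finite_toSet
      (fun T hT => by simpa [Finset.mem_powerset] using hT.1)
  · intro T hT
    exact coneOf_closed_of_li hT.2

/-- Farkas' lemma. -/
lemma farkas {v : ι → E} {s : Finset ι} {Y : E}
    (h : ∀ X : E, (∀ i ∈ s, ⟪v i, X⟫ ≤ 0) → ⟪Y, X⟫ ≤ 0) : Y ∈ coneOf v s := by
  classical
  by_contra hY
  set K : ConvexCone ℝ E :=
    { carrier := coneOf v s
      smul_mem' := by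
        rintro c hc x ⟨t, ht, rfl⟩
        refine ⟨fun i => c * t i, fun i => mul_nonneg (le_of_lt hc) (ht i), ?_⟩
        rw [Finset.smul_sum]
        exact Finset.sum_congr rfl fun i _ => (mul_smul c (t i) (v i)).symm
      add_mem' := by
        rintro x ⟨t, ht, rfl⟩ y ⟨u, hu, rfl⟩
        exact ⟨fun i => t i + u i, fun i => add_nonneg (ht i) (hu i),
          by rw [← Finset.sum_add_distrib]; exact Finset.sum_congr rfl fun i _ =>
            (add_smul (t i) (u i) (v i)).symm⟩ } with hK
  have hne : (K : Set E).Nonempty := ⟨0, ⟨fun _ => 0, fun _ => le_rfl, by simp⟩⟩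
  have hcl : IsClosed (K : Set E) := coneOf_isClosed v s
  obtain ⟨W, hW1, hW2⟩ := ProperCone.hyperplane_separation'
    (⟨{ carrier := coneOf v s
        add_mem' := fun {a b} ha hb => K.add_mem' ha hb
        zero_mem' := ⟨fun _ => 0, fun _ => le_rfl, by simp⟩
        smul_mem' := by
          rintro ⟨c, hc⟩ x ⟨t, ht, rfl⟩
          refine ⟨fun i => c * t i, fun i => mul_nonneg hc (ht i), ?_⟩
          show c • ∑ i ∈ s, t i • v i = _
          rw [Finset.smul_sum]
          exact Finset.sum_congr rfl fun i _ => (mul_smul c (t i) (v i)).symm }, hcl⟩ :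
      ProperCone ℝ E) hY
  have hXin : ∀ i ∈ s, ⟪v i, -W⟫ ≤ 0 := by
    intro i hi
    have hvi : v i ∈ K := by
      refine ⟨fun k => if k = i then 1 else 0, fun k => ?_, ?_⟩
      · dsimp only
        split
        · exact zero_le_one
        · exact le_rfl
      · have hcg : ∀ k ∈ s, (if k = i then (1:ℝ) else 0) • v k = if k = i then v k else 0 :=
          fun k _ => by split <;> simp
        rw [Finset.sum_congr rfl hcg, Finset.sum_ite_eq' s i (fun k => v k)]
        simp [hi]
    have := hW1 _ hvi
    rw [inner_neg_right]
    linarith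
  have := h (-W) hXin
  rw [inner_neg_right] at this
  have : 0 ≤ ⟪Y, W⟫ := by linarith
  rw [real_inner_comm] at this
  linarith


/-- Gale's theorem of the alternative (one direction): an infeasible finite system of linear
inequalities admits a nonnegative combination summing to a contradiction. -/
lemma gale {s : Finset (E × ℝ)} (hinfeas : ∀ X : E, ∃ p ∈ s, p.2 < ⟪p.1, X⟫) :
    ∃ t : E × ℝ → ℝ, (∀ p, 0 ≤ t p) ∧ (∑ p ∈ s, t p • p.1 = 0) ∧ (∑ p ∈ s, t p * p.2 = -1) := by
  classical
  let G := WithLp 2 (E × ℝ)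
  let g : E × ℝ → G := fun p => (WithLp.equiv 2 (E × ℝ)).symm p
  have key : g ((0 : E), (-1 : ℝ)) ∈ coneOf g s := by
    apply farkas
    intro X hX
    -- X : G; show ⟪g (0,-1), X⟫ ≤ 0
    have hXfst : ∀ p ∈ s, ⟪p.1, X.fst⟫ + p.2 * X.snd ≤ 0 := by
      intro p hp
      have := hX p hp
      rw [WithLp.prod_inner_apply] at this
      simpa [g, RCLike.inner_apply, conj_trivial, mul_comm] using this
    have hsnd : 0 ≤ X.snd := by
      by_contra hneg
      push_neg at hneg
      obtain ⟨p, hp, hviol⟩ := hinfeas ((-X.snd)⁻¹ • X.fst)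
      have h1 := hXfst p hp
      rw [real_inner_smul_right] at hviol
      have hpos : 0 < -X.snd := by linarith
      have h2 : ⟪p.1, X.fst⟫ ≤ p.2 * (-X.snd) := by linarith
      have h3 : (-X.snd)⁻¹ * ⟪p.1, X.fst⟫ ≤ p.2 := by
        rw [inv_mul_le_iff₀ hpos]; linarith [h2]
      linarith
    rw [WithLp.prod_inner_apply]
    simp only [g, WithLp.equiv_symm_apply, WithLp.ofLp_toLp, WithLp.ofLp_fst, WithLp.ofLp_snd, inner_zero_left,
      RCLike.inner_apply, conj_trivial, zero_add]
    nlinarith [hsnd]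
  obtain ⟨t, ht0, hsum⟩ := key
  let L1 : G →ₗ[ℝ] E := (LinearMap.fst ℝ E ℝ).comp (WithLp.linearEquiv 2 ℝ (E × ℝ)).toLinearMap
  let L2 : G →ₗ[ℝ] ℝ := (LinearMap.snd ℝ E ℝ).comp (WithLp.linearEquiv 2 ℝ (E × ℝ)).toLinearMap
  have e1 : ∀ p : E × ℝ, L1 (g p) = p.1 := fun p => rfl
  have e2 : ∀ p : E × ℝ, L2 (g p) = p.2 := fun p => rfl
  refine ⟨t, ht0, ?_, ?_⟩
  · have h1 := congrArg L1 hsum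
    rw [map_sum] at h1
    simp only [map_smul, e1] at h1
    exact h1.symm
  · have h2 := congrArg L2 hsum
    rw [map_sum] at h2
    simp only [map_smul, e2, smul_eq_mul] at h2
    exact h2.symm

/-- A linear functional bounded above on a nonempty polyhedron attains its supremum. -/
lemma attain {s : Finset (E × ℝ)} (hne : Set.Nonempty {X : E | ∀ p ∈ s, ⟪p.1, X⟫ ≤ p.2}) {Y : E}
    (hY : ∀ X : E, (∀ p ∈ s, ⟪p.1, X⟫ ≤ 0) → ⟪Y, X⟫ ≤ 0) :
    ∃ X₀ ∈ {X : E | ∀ p ∈ s, ⟪p.1, X⟫ ≤ p.2},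
      ∀ H ∈ {X : E | ∀ p ∈ s, ⟪p.1, X⟫ ≤ p.2}, ⟪Y, H⟫ ≤ ⟪Y, X₀⟫ := by
  classical
  set C : Set E := {X : E | ∀ p ∈ s, ⟪p.1, X⟫ ≤ p.2} with hCdef
  -- boundedness via Farkas
  have hYcone : Y ∈ coneOf (Prod.fst : E × ℝ → E) s := farkas hY
  obtain ⟨t, ht0, htY⟩ := hYcone
  have hbound : ∀ X ∈ C, ⟪Y, X⟫ ≤ ∑ p ∈ s, t p * p.2 := by
    intro X hX
    rw [htY, sum_inner]
    apply Finset.sum_le_sum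
    intro p hp
    rw [real_inner_smul_left]
    exact mul_le_mul_of_nonneg_left (hX p hp) (ht0 p)
  have hbdd : BddAbove ((fun X => ⟪Y, X⟫) '' C) := by
    refine ⟨∑ p ∈ s, t p * p.2, ?_⟩
    rintro _ ⟨X, hX, rfl⟩
    exact hbound X hX
  have himg : ((fun X => ⟪Y, X⟫) '' C).Nonempty := hne.image _
  set M : ℝ := sSup ((fun X => ⟪Y, X⟫) '' C) with hM
  have hle : ∀ H ∈ C, ⟪Y, H⟫ ≤ M := fun H hH => le_csSup hbdd ⟨H, hH, rfl⟩
  suffices h : ∃ X₀ ∈ C, M ≤ ⟪Y, X₀⟫ by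
    obtain ⟨X₀, hX₀, hMle⟩ := h
    exact ⟨X₀, hX₀, fun H hH => le_trans (hle H hH) hMle⟩
  by_cases hq : (-Y, -M) ∈ s
  · obtain ⟨X, hX⟩ := hne
    refine ⟨X, hX, ?_⟩
    have := hX (-Y, -M) hq
    simp only [inner_neg_left] at this
    linarith
  · by_contra hno
    push_neg at hno
    have hinfeas : ∀ X : E, ∃ p ∈ insert (-Y, -M) s, p.2 < ⟪p.1, X⟫ := by
      intro X
      by_contra hfeas
      push_neg at hfeas
      have hXC : X ∈ C := fun p hp => hfeas p (Finset.mem_insert_of_mem hp)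
      have h1 := hno X hXC
      have h2 := hfeas (-Y, -M) (Finset.mem_insert_self _ _)
      simp only [inner_neg_left] at h2
      linarith
    obtain ⟨u, hu0, husum, huval⟩ := gale hinfeas
    rw [Finset.sum_insert hq] at husum huval
    set u₀ := u (-Y, -M) with hu₀
    have husum : u₀ • -Y + ∑ x ∈ s, u x • x.1 = 0 := husum
    have huval : u₀ * -M + ∑ x ∈ s, u x * x.2 = -1 := huval
    rcases eq_or_lt_of_le (hu0 (-Y, -M)) with hzero | hposu
    · -- u₀ = 0 : contradiction with nonemptiness
      obtain ⟨c, hc⟩ := hne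
      rw [← hu₀] at hzero
      rw [← hzero] at husum huval
      simp only [zero_smul, zero_add, zero_mul] at husum huval
      have h1 : ⟪∑ p ∈ s, u p • p.1, c⟫ = 0 := by rw [husum, inner_zero_left]
      rw [sum_inner] at h1
      have h2 : ∑ p ∈ s, ⟪u p • p.1, c⟫ ≤ ∑ p ∈ s, u p * p.2 := by
        apply Finset.sum_le_sum
        intro p hp
        rw [real_inner_smul_left]
        exact mul_le_mul_of_nonneg_left (hc p hp) (hu0 p)
      rw [h1] at h2
      linarith
    · -- u₀ > 0
      have husum' : ∑ p ∈ s, u p • p.1 = u₀ • Y := by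
        have h := husum
        rw [smul_neg, neg_add_eq_zero] at h
        exact h.symm
      have hub : ∀ z ∈ (fun X => ⟪Y, X⟫) '' C, z ≤ M - 1 / u₀ := by
        rintro _ ⟨X, hX, rfl⟩
        have h1 : ⟪∑ p ∈ s, u p • p.1, X⟫ ≤ ∑ p ∈ s, u p * p.2 := by
          rw [sum_inner]
          apply Finset.sum_le_sum
          intro p hp
          rw [real_inner_smul_left]
          exact mul_le_mul_of_nonneg_left (hX p hp) (hu0 p)
        rw [husum', real_inner_smul_left] at h1
        have h2 : ∑ p ∈ s, u p * p.2 = u₀ * M - 1 := by linarith [huval]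
        rw [h2] at h1
        have h3 : u₀ * (M - 1 / u₀) = u₀ * M - 1 := by
          rw [mul_sub, mul_one_div_cancel (show u₀ ≠ 0 from ne_of_gt hposu)]
        rw [← mul_le_mul_iff_right₀ hposu, h3]
        simpa using h1
      have hMle : M ≤ M - 1 / u₀ := csSup_le himg hub
      have hpos : 0 < 1 / u₀ := by positivity
      linarith


/-! ### basic facts -/

lemma face_subset {C F : Set E} (hF : IsFace C F) : F ⊆ C := by
  obtain ⟨-, lam, c, -, rfl⟩ := hF
  exact fun H hH => hH.1

lemma mem_tangCone {C : Set E} {X c : E} (hc : c ∈ C) : c - X ∈ tangCone C X :=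
  ⟨1, zero_le_one, c, hc, (one_smul ℝ _).symm⟩

lemma normCone_inner_le {C : Set E} {X Y c : E} (hY : Y ∈ normCone C X) (hc : c ∈ C) :
    ⟪Y, c⟫ ≤ ⟪Y, X⟫ := by
  have := hY _ (mem_tangCone (X := X) hc)
  rw [inner_sub_right] at this
  linarith

lemma mem_normCone_of_max {C : Set E} {X Y : E} (h : ∀ c ∈ C, ⟪Y, c⟫ ≤ ⟪Y, X⟫) :
    Y ∈ normCone C X := by
  rintro W ⟨t, ht, c, hc, rfl⟩
  rw [real_inner_smul_right, inner_sub_right]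
  have := h c hc
  nlinarith

lemma convex_normCone (C : Set E) (X : E) : Convex ℝ (normCone C X) := by
  intro a ha b hb ta tb hta htb hsum
  intro W hW
  have h1 := ha W hW
  have h2 := hb W hW
  rw [inner_add_left, real_inner_smul_left, real_inner_smul_left]
  nlinarith

lemma IsFGConvex.convex {C : Set E} (hC : IsFGConvex C) : Convex ℝ C := by
  obtain ⟨s, rfl⟩ := hC
  intro a ha b hb ta tb hta htb hsum p hp
  have h1 := ha p hp
  have h2 := hb p hp
  rw [inner_add_right, real_inner_smul_right, real_inner_smul_right]
  have h3 : ta * p.2 + tb * p.2 = p.2 := by linear_combination p.2 * hsum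
  nlinarith [mul_le_mul_of_nonneg_left h1 hta, mul_le_mul_of_nonneg_left h2 htb, h3]

lemma face_convex {C F : Set E} (hC : IsFGConvex C) (hF : IsFace C F) : Convex ℝ F := by
  obtain ⟨-, lam, c, -, rfl⟩ := hF
  intro a ha b hb ta tb hta htb hsum
  refine ⟨hC.convex ha.1 hb.1 hta htb hsum, ?_⟩
  rw [inner_add_right, real_inner_smul_right, real_inner_smul_right, ha.2, hb.2]
  linear_combination c * hsum

/-- The key characterization: if `X` is in the relative interior of a face `F` and `Y` is in
the relative interior of the normal cone at `X`, then `F` is exactly the argmax set of `Y`. -/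
lemma face_eq_argmax {C F : Set E} (hC : IsFGConvex C) (hF : IsFace C F) {X Y : E}
    (hX : X ∈ intrinsicInterior ℝ F) (hY : Y ∈ intrinsicInterior ℝ (normCone C X)) :
    F = {H | H ∈ C ∧ ⟪Y, H⟫ = ⟪Y, X⟫} := by
  have hXF : X ∈ F := intrinsicInterior_subset hX
  have hXC : X ∈ C := face_subset hF hXF
  have hYN : Y ∈ normCone C X := intrinsicInterior_subset hY
  obtain ⟨-, lam, c, hsupp, hFeq⟩ := hF
  have hlamX : ⟪lam, X⟫ = c := (hFeq ▸ hXF).2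
  ext H
  constructor
  · intro hH
    have hHC : H ∈ C := (hFeq ▸ hH).1
    obtain ⟨ε, hε, hmem⟩ := relint_extend hX hH
    have hmemC : X + ε • (X - H) ∈ C := face_subset ⟨⟨X, hXF⟩, lam, c, hsupp, hFeq⟩ hmem
    have h1 : ⟪Y, X + ε • (X - H)⟫ ≤ ⟪Y, X⟫ := normCone_inner_le hYN hmemC
    have h2 : ⟪Y, H⟫ ≤ ⟪Y, X⟫ := normCone_inner_le hYN hHC
    rw [inner_add_right, real_inner_smul_right, inner_sub_right] at h1
    constructor
    · exact hHC
    · nlinarith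
  · rintro ⟨hHC, hmax⟩
    -- lam belongs to the normal cone at X
    have hlamN : lam ∈ normCone C X := by
      apply mem_normCone_of_max
      intro c' hc'
      rw [hlamX]
      exact hsupp c' hc'
    obtain ⟨ε, hε, hmem⟩ := relint_extend hY hlamN
    have h1 : ⟪Y + ε • (Y - lam), H⟫ ≤ ⟪Y + ε • (Y - lam), X⟫ := normCone_inner_le hmem hHC
    rw [inner_add_left, inner_add_left, real_inner_smul_left, real_inner_smul_left,
      inner_sub_left, inner_sub_left] at h1
    have hlamH : ⟪lam, H⟫ ≤ c := hsupp H hHC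
    have hgeq : c ≤ ⟪lam, H⟫ := by nlinarith [hmax, hlamX]
    rw [hFeq]
    exact ⟨hHC, le_antisymm hlamH hgeq⟩

/-- Every normal cone at a point of `C` is contained in the dual of the asymptotic cone. -/
lemma normCone_subset_polar {C : Set E} {X : E} (hX : X ∈ C) :
    normCone C X ⊆ polarCone (asympCone C) := by
  intro Y hY Z hZ
  have hXZ : X + Z ∈ C := by
    rw [← hZ]
    exact Set.add_mem_add hX ⟨1, zero_le_one, (one_smul ℝ Z).symm⟩
  have := normCone_inner_le hY hXZ
  rw [inner_add_right] at this
  linarith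

lemma asympCone_eq {s : Finset (E × ℝ)} (hne : Set.Nonempty {X : E | ∀ p ∈ s, ⟪p.1, X⟫ ≤ p.2}) :
    asympCone {X : E | ∀ p ∈ s, ⟪p.1, X⟫ ≤ p.2} = {X : E | ∀ p ∈ s, ⟪p.1, X⟫ ≤ 0} := by
  set C : Set E := {X : E | ∀ p ∈ s, ⟪p.1, X⟫ ≤ p.2} with hC
  ext Z
  constructor
  · intro hZ p hp
    have hZeq : C + {Y | ∃ t : ℝ, 0 ≤ t ∧ Y = t • Z} = C := hZ
    obtain ⟨c, hc⟩ := hne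
    by_contra hpos
    push_neg at hpos
    set t : ℝ := (p.2 - ⟪p.1, c⟫ + 1) / ⟪p.1, Z⟫ with ht
    have hnum : 0 < p.2 - ⟪p.1, c⟫ + 1 := by linarith [hc p hp]
    have htpos : 0 < t := div_pos hnum hpos
    have hmem : c + t • Z ∈ C := by
      rw [← hZeq]
      exact Set.add_mem_add hc ⟨t, le_of_lt htpos, rfl⟩
    have h2 := hmem p hp
    rw [inner_add_right, real_inner_smul_right, ht,
      div_mul_cancel₀ _ (ne_of_gt hpos)] at h2
    linarith
  · intro hZ
    show C + {Y | ∃ t : ℝ, 0 ≤ t ∧ Y = t • Z} = C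
    apply Set.Subset.antisymm
    · rintro x hx
      rw [Set.mem_add] at hx
      obtain ⟨a, ha, y, ⟨t, htn, rfl⟩, rfl⟩ := hx
      intro p hp
      rw [inner_add_right, real_inner_smul_right]
      have h1 := ha p hp
      have h2 := hZ p hp
      nlinarith
    · intro x hx
      rw [Set.mem_add]
      exact ⟨x, hx, 0, ⟨0, le_rfl, (zero_smul ℝ Z).symm⟩, add_zero x⟩

lemma slack_step {s : Finset (E × ℝ)} {X : E} (hX : X ∈ {X : E | ∀ p ∈ s, ⟪p.1, X⟫ ≤ p.2})
    {W : E} (hW : ∀ p ∈ s, ⟪p.1, X⟫ = p.2 → ⟪p.1, W⟫ ≤ 0) :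
    ∃ ε : ℝ, 0 < ε ∧ X + ε • W ∈ {X : E | ∀ p ∈ s, ⟪p.1, X⟫ ≤ p.2} := by
  classical
  set g : E × ℝ → ℝ := fun p => if ⟪p.1, W⟫ ≤ 0 then 1 else (p.2 - ⟪p.1, X⟫) / ⟪p.1, W⟫ with hg
  have hgpos : ∀ p ∈ s, 0 < g p := by
    intro p hp
    simp only [hg]
    split
    · exact one_pos
    · rename_i h
      push_neg at h
      have hne : ⟪p.1, X⟫ ≠ p.2 := fun heq => absurd (hW p hp heq) (not_le.2 h)
      have : ⟪p.1, X⟫ < p.2 := lt_of_le_of_ne (hX p hp) hne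
      exact div_pos (by linarith) h
  set ε : ℝ := (insert (1:ℝ) (s.image g)).min' (Finset.insert_nonempty _ _) with hε
  have hεpos : 0 < ε := by
    rw [hε, Finset.lt_min'_iff]
    intro y hy
    rcases Finset.mem_insert.1 hy with rfl | hy
    · exact one_pos
    · obtain ⟨p, hp, rfl⟩ := Finset.mem_image.1 hy
      exact hgpos p hp
  refine ⟨ε, hεpos, ?_⟩
  intro p hp
  have hεle : ε ≤ g p := Finset.min'_le _ _ (Finset.mem_insert_of_mem (Finset.mem_image_of_mem g hp))
  rw [inner_add_right, real_inner_smul_right]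
  by_cases h : ⟪p.1, W⟫ ≤ 0
  · have : ε * ⟪p.1, W⟫ ≤ 0 := mul_nonpos_of_nonneg_of_nonpos (le_of_lt hεpos) h
    linarith [hX p hp]
  · push_neg at h
    have hgp : g p = (p.2 - ⟪p.1, X⟫) / ⟪p.1, W⟫ := by simp only [hg]; rw [if_neg (not_le.2 h)]
    rw [hgp] at hεle
    have := (le_div_iff₀ h).1 hεle
    linarith

lemma tangCone_eq {s : Finset (E × ℝ)} {X : E} (hX : X ∈ {X : E | ∀ p ∈ s, ⟪p.1, X⟫ ≤ p.2}) :
    tangCone {X : E | ∀ p ∈ s, ⟪p.1, X⟫ ≤ p.2} X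
      = {W : E | ∀ p ∈ s, ⟪p.1, X⟫ = p.2 → ⟪p.1, W⟫ ≤ 0} := by
  apply Set.Subset.antisymm
  · rintro W ⟨t, ht, c, hc, rfl⟩ p hp hact
    rw [real_inner_smul_right, inner_sub_right, hact]
    have := hc p hp
    nlinarith
  · intro W hW
    obtain ⟨ε, hε, hmem⟩ := slack_step hX hW
    refine ⟨ε⁻¹, le_of_lt (by positivity), X + ε • W, hmem, ?_⟩
    rw [add_sub_cancel_left, smul_smul, inv_mul_cancel₀ (ne_of_gt hε), one_smul]


end Aux

theorem stmt_4 (C : Set E) (hC : IsFGConvex C) (hne : C.Nonempty) :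
    (∀ F F' : Set E, IsFace C F → IsFace C F' → F ≠ F' →
      aFplus C F ∩ aFplus C F' = ∅) ∧
    (∀ F : Set E, IsFace C F → aFplus C F ⊆ polarCone (asympCone C)) ∧
    polarCone (asympCone C) = ⋃ F ∈ {F : Set E | IsFace C F}, aFplus C F := by
  classical
  obtain ⟨s, hs⟩ := id hC
  refine ⟨?_, ?_, ?_⟩
  · -- disjointness
    intro F F' hF hF' hFF'
    rw [Set.eq_empty_iff_forall_notMem]
    rintro Y ⟨hY1, hY2⟩
    rw [aFplus, Set.mem_iUnion₂] at hY1 hY2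
    obtain ⟨X, hX, hYX⟩ := hY1
    obtain ⟨X', hX', hYX'⟩ := hY2
    have hXC : X ∈ C := face_subset hF (intrinsicInterior_subset hX)
    have hX'C : X' ∈ C := face_subset hF' (intrinsicInterior_subset hX')
    have hval : ⟪Y, X'⟫ = ⟪Y, X⟫ :=
      le_antisymm (normCone_inner_le (intrinsicInterior_subset hYX) hX'C)
        (normCone_inner_le (intrinsicInterior_subset hYX') hXC)
    have e1 := face_eq_argmax hC hF hX hYX
    have e2 := face_eq_argmax hC hF' hX' hYX'
    apply hFF'
    rw [e1, e2, hval]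
  · -- inclusion in the dual cone
    intro F hF Y hY
    rw [aFplus, Set.mem_iUnion₂] at hY
    obtain ⟨X, hX, hYX⟩ := hY
    exact normCone_subset_polar (face_subset hF (intrinsicInterior_subset hX))
      (intrinsicInterior_subset hYX)
  · -- the union
    apply Set.Subset.antisymm
    · intro Y hY
      have hne' : Set.Nonempty {X : E | ∀ p ∈ s, ⟪p.1, X⟫ ≤ p.2} := by rw [← hs]; exact hne
      have hYdual : ∀ X : E, (∀ p ∈ s, ⟪p.1, X⟫ ≤ 0) → ⟪Y, X⟫ ≤ 0 := by
        intro X hX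
        apply hY
        rw [hs, asympCone_eq hne']
        exact hX
      obtain ⟨X₀, hX₀, hmax⟩ := attain hne' hYdual
      have hX₀C : X₀ ∈ C := by rw [hs]; exact hX₀
      have hmaxC : ∀ H ∈ C, ⟪Y, H⟫ ≤ ⟪Y, X₀⟫ := by
        intro H hH
        exact hmax H (by rw [← hs]; exact hH)
      set F : Set E := {H | H ∈ C ∧ ⟪Y, H⟫ = ⟪Y, X₀⟫} with hFdef
      have hFface : IsFace C F := ⟨⟨X₀, hX₀C, rfl⟩, Y, ⟪Y, X₀⟫, hmaxC, rfl⟩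
      have hFconv : Convex ℝ F := face_convex hC hFface
      obtain ⟨X, hX⟩ := Set.Nonempty.intrinsicInterior hFconv ⟨X₀, hX₀C, rfl⟩
      have hXF : X ∈ F := intrinsicInterior_subset hX
      have hXC : X ∈ C := hXF.1
      have hXs : X ∈ {X : E | ∀ p ∈ s, ⟪p.1, X⟫ ≤ p.2} := by rw [← hs]; exact hXC
      set D : Set E := {W : E | ∀ p ∈ s, ⟪p.1, X⟫ = p.2 → ⟪p.1, W⟫ ≤ 0} with hDdef
      have htang : tangCone C X = D := by
        conv_lhs => rw [hs]
        exact tangCone_eq hXs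
      have hNeq : normCone C X = {Z : E | ∀ W ∈ D, ⟪Z, W⟫ ≤ 0} := by
        unfold normCone
        rw [htang]
      have hYrelint : Y ∈ intrinsicInterior ℝ (normCone C X) := by
        rw [hNeq]
        apply mem_intrinsicInterior_dual
        · -- D is closed
          have hDeq : D = ⋂ p ∈ (s : Set (E × ℝ)), {W : E | ⟪p.1, X⟫ = p.2 → ⟪p.1, W⟫ ≤ 0} := by
            ext W; simp [hDdef]
          rw [hDeq]
          apply isClosed_biInter
          intro p hp
          by_cases hact : ⟪p.1, X⟫ = p.2
          · have h' : {W : E | ⟪p.1, X⟫ = p.2 → ⟪p.1, W⟫ ≤ 0} = {W : E | ⟪p.1, W⟫ ≤ 0} := by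
              ext W; simp [hact]
            rw [h']
            exact isClosed_le (continuous_const.inner continuous_id) continuous_const
          · have h' : {W : E | ⟪p.1, X⟫ = p.2 → ⟪p.1, W⟫ ≤ 0} = Set.univ := by
              ext W; simp [hact]
            rw [h']
            exact isClosed_univ
        · intro p hp hact
          rw [inner_zero_right]
        · intro t ht w hw p hp hact
          rw [real_inner_smul_right]
          exact mul_nonpos_of_nonneg_of_nonpos ht (hw p hp hact)
        · intro w hw v hv p hp hact
          rw [inner_add_right]
          linarith [hw p hp hact, hv p hp hact]
        · -- Y is in the dual of D
          intro W hW
          have hWt : W ∈ tangCone C X := by rw [htang]; exact hW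
          obtain ⟨t, ht, c, hcC, rfl⟩ := hWt
          rw [real_inner_smul_right, inner_sub_right]
          have h1 : ⟪Y, c⟫ ≤ ⟪Y, X₀⟫ := hmaxC c hcC
          have h2 : ⟪Y, X⟫ = ⟪Y, X₀⟫ := hXF.2
          nlinarith
        · -- the lineality condition
          intro W hW hYW
          obtain ⟨ε, hε, hmem⟩ := slack_step hXs hW
          have hmemC : X + ε • W ∈ C := by rw [hs]; exact hmem
          have hmemF : X + ε • W ∈ F := by
            refine ⟨hmemC, ?_⟩
            rw [inner_add_right, real_inner_smul_right, hYW, mul_zero, add_zero]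
            exact hXF.2
          obtain ⟨ε', hε', hmem'⟩ := relint_extend hX hmemF
          have hcomp : X + ε' • (X - (X + ε • W)) = X - (ε' * ε) • W := by module
          rw [hcomp] at hmem'
          have hmemC' : X - (ε' * ε) • W ∈ C := face_subset hFface hmem'
          have hnW : -W ∈ tangCone C X := by
            refine ⟨(ε' * ε)⁻¹, le_of_lt (by positivity), X - (ε' * ε) • W, hmemC', ?_⟩
            rw [sub_sub_cancel_left, smul_neg, smul_smul,
              inv_mul_cancel₀ (by positivity), one_smul]
          rw [htang] at hnW
          exact hnW
      rw [Set.mem_iUnion₂]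
      refine ⟨F, hFface, ?_⟩
      rw [aFplus, Set.mem_iUnion₂]
      exact ⟨X, hX, hYrelint⟩
    · intro Y hY
      rw [Set.mem_iUnion₂] at hY
      obtain ⟨F, hFface, hYF⟩ := hY
      rw [aFplus, Set.mem_iUnion₂] at hYF
      obtain ⟨X, hX, hYX⟩ := hYF
      exact normCone_subset_polar (face_subset hFface (intrinsicInterior_subset hX))
        (intrinsicInterior_subset hYX)
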